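/- Let k and n be positive integers and ζ = exp(2πi/k). Let s₀,…,s_{k−1} be k-th roots of unity such that the circulant matrix S = circ(s₀,…,s_{k−1}), with (i,i′) entry s_{(i′−i) mod k}, is a Butson Hadamard matrix in BH(k,k), and set λ_m = Σ_{j=0}^{k−1} s_j ζ^{jm} for 0 ≤ m ≤ k−1. Let H ∈ BH(kn+k, k) have rows and columns indexed by the disjoint union {0,…,k−1} ⊔ ({0,…,k−1} × {0,…,n−1}) and satisfy: the top-left k × k block equals S; H(i, (c,u)) = ζ^{ic} for all i, c, u (top-right block equals F_k ⊗ j_n); and H((c,u), i) = ζ^{−ic} for all i, c, u (bottom-left block equals F_k* ⊗ j_nᵀ). Write A_{m,j} for the n × n block (H((m,t), (j,u)))_{t,u}. Then for all m and j: every row sum and every column sum of A_{m,j} equals 0 when j ≠ m, and every row sum and every column sum of A_{m,m} equals −conj(λ_m). -/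

import Mathlib

theorem stmt_3 (k n : ℕ) (hk : 0 < k) (hn : 0 < n)
    (ζ : ℂ) (hζ : ζ = Complex.exp (2 * Real.pi * Complex.I / k))
    (s : Fin k → ℂ) (hs : ∀ j, s j ^ k = 1)
    (S : Matrix (Fin k) (Fin k) ℂ) (hS : ∀ i i', S i i' = s (i' - i))
    (hSHad : S * S.conjTranspose = (k : ℂ) • 1)
    (lam : Fin k → ℂ)
    (hlam : ∀ m : Fin k, lam m = ∑ j : Fin k, s j * ζ ^ ((j : ℕ) * (m : ℕ)))
    (H : Matrix (Fin k ⊕ Fin k × Fin n) (Fin k ⊕ Fin k × Fin n) ℂ)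
    (hent : ∀ r c, H r c ^ k = 1)
    (hHad : H * H.conjTranspose = ((k * n + k : ℕ) : ℂ) • 1)
    (hTL : ∀ i i' : Fin k, H (Sum.inl i) (Sum.inl i') = S i i')
    (hTR : ∀ (i c : Fin k) (u : Fin n),
      H (Sum.inl i) (Sum.inr (c, u)) = ζ ^ ((i : ℕ) * (c : ℕ)))
    (hBL : ∀ (i c : Fin k) (u : Fin n),
      H (Sum.inr (c, u)) (Sum.inl i) = (starRingEnd ℂ) (ζ ^ ((i : ℕ) * (c : ℕ)))) :
    ∀ m j : Fin k,
      (j ≠ m →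
        (∀ t : Fin n, ∑ u : Fin n, H (Sum.inr (m, t)) (Sum.inr (j, u)) = 0) ∧
        (∀ u : Fin n, ∑ t : Fin n, H (Sum.inr (m, t)) (Sum.inr (j, u)) = 0)) ∧
      (j = m →
        (∀ t : Fin n, ∑ u : Fin n, H (Sum.inr (m, t)) (Sum.inr (j, u)) =
          -(starRingEnd ℂ) (lam m)) ∧
        (∀ u : Fin n, ∑ t : Fin n, H (Sum.inr (m, t)) (Sum.inr (j, u)) =
          -(starRingEnd ℂ) (lam m))) := by
  haveI : NeZero k := ⟨hk.ne'⟩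
  have hk0 : (k : ℂ) ≠ 0 := Nat.cast_ne_zero.mpr hk.ne'
  have hprim : IsPrimitiveRoot ζ k := hζ ▸ Complex.isPrimitiveRoot_exp k hk.ne'
  have hζk : ζ ^ k = 1 := hprim.pow_eq_one
  -- |ζ| = 1 and ζ * conj ζ = 1
  have habs : ‖ζ‖ = 1 := by
    have h1 : ‖ζ‖ ^ k = 1 := by rw [← norm_pow, hζk, norm_one]
    have h0 : (0:ℝ) ≤ ‖ζ‖ := norm_nonneg _
    rcases lt_trichotomy (‖ζ‖) 1 with h | h | h
    · have := pow_lt_one₀ h0 h hk.ne'; linarith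
    · exact h
    · have := one_lt_pow₀ h hk.ne'; linarith
  have hζconj : ζ * (starRingEnd ℂ) ζ = 1 := by
    rw [Complex.mul_conj, Complex.normSq_eq_norm_sq, habs]; norm_num
  have hconjmul : ∀ x : ℕ, ζ ^ x * (starRingEnd ℂ) (ζ ^ x) = 1 := by
    intro x; rw [map_pow, ← mul_pow, hζconj, one_pow]
  -- powers of ζ depend only on exponent mod k
  have hpowmod : ∀ x : ℕ, ζ ^ (x % k) = ζ ^ x := by
    intro x
    conv_rhs => rw [← Nat.div_add_mod x k]
    rw [pow_add, pow_mul, hζk, one_pow, one_mul]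
  have hcong : ∀ a b : ℕ, a % k = b % k → ζ ^ a = ζ ^ b := by
    intro a b h; rw [← hpowmod a, ← hpowmod b, h]
  have hadd : ∀ (a b : Fin k) (x : ℕ),
      ζ ^ (((a + b : Fin k) : ℕ) * x) = ζ ^ ((a : ℕ) * x) * ζ ^ ((b : ℕ) * x) := by
    intro a b x
    rw [← pow_add, ← add_mul]
    refine hcong _ _ ?_
    have h1 : ((a + b : Fin k) : ℕ) ≡ (a : ℕ) + (b : ℕ) [MOD k] := by
      rw [Fin.val_add]; exact Nat.mod_modEq _ k
    exact h1.mul_right x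
  have hsub : ∀ (a b : Fin k) (x : ℕ),
      ζ ^ (((a - b : Fin k) : ℕ) * x) =
        ζ ^ ((a : ℕ) * x) * (starRingEnd ℂ) (ζ ^ ((b : ℕ) * x)) := by
    intro a b x
    have h1 : ζ ^ (((a - b : Fin k) : ℕ) * x) * ζ ^ ((b : ℕ) * x) = ζ ^ ((a : ℕ) * x) := by
      rw [← hadd (a - b) b x, sub_add_cancel]
    calc ζ ^ (((a - b : Fin k) : ℕ) * x)
        = ζ ^ (((a - b : Fin k) : ℕ) * x) *
            (ζ ^ ((b : ℕ) * x) * (starRingEnd ℂ) (ζ ^ ((b : ℕ) * x))) := by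
          rw [hconjmul]; ring
      _ = ζ ^ ((a : ℕ) * x) * (starRingEnd ℂ) (ζ ^ ((b : ℕ) * x)) := by
          rw [← mul_assoc, h1]
  -- geometric sum of a k-th root of unity
  have hgeom : ∀ w : ℂ, w ^ k = 1 → ∑ i : Fin k, w ^ (i : ℕ) = if w = 1 then (k : ℂ) else 0 := by
    intro w hw
    rw [Fin.sum_univ_eq_sum_range (fun i => w ^ i) k]
    split_ifs with h
    · simp [h]
    · rw [geom_sum_eq h k, hw, sub_self, zero_div]
  -- orthogonality of characters
  have horth : ∀ a b : Fin k,
      (∑ i : Fin k, ζ ^ ((i : ℕ) * (a : ℕ)) * (starRingEnd ℂ) (ζ ^ ((i : ℕ) * (b : ℕ)))) =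
        if a = b then (k : ℂ) else 0 := by
    intro a b
    have hrw : ∀ i : Fin k,
        ζ ^ ((i : ℕ) * (a : ℕ)) * (starRingEnd ℂ) (ζ ^ ((i : ℕ) * (b : ℕ))) =
          (ζ ^ (a : ℕ) * ((starRingEnd ℂ) ζ) ^ (b : ℕ)) ^ (i : ℕ) := by
      intro i
      rw [map_pow, mul_pow, ← pow_mul, ← pow_mul, mul_comm (a : ℕ), mul_comm (b : ℕ)]
    rw [Finset.sum_congr rfl fun i _ => hrw i]
    have hw : (ζ ^ (a : ℕ) * ((starRingEnd ℂ) ζ) ^ (b : ℕ)) ^ k = 1 := by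
      rw [mul_pow, ← pow_mul, ← pow_mul, mul_comm (a : ℕ) k, mul_comm (b : ℕ) k,
        pow_mul, pow_mul, hζk, ← map_pow, hζk, map_one, one_pow, one_pow, one_mul]
    rw [hgeom _ hw]
    by_cases hab : a = b
    · subst hab
      rw [if_pos rfl, if_pos]
      have := hconjmul (a : ℕ)
      rw [map_pow] at this
      exact this
    · rw [if_neg hab, if_neg]
      intro hcontra
      have h2 : ζ ^ (b : ℕ) * ((starRingEnd ℂ) ζ) ^ (b : ℕ) = 1 := by
        have := hconjmul (b : ℕ); rwa [map_pow] at this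
      have hne : ((starRingEnd ℂ) ζ) ^ (b : ℕ) ≠ 0 :=
        right_ne_zero_of_mul_eq_one h2
      have h3 : ζ ^ (a : ℕ) = ζ ^ (b : ℕ) :=
        mul_right_cancel₀ hne (by rw [hcontra, h2])
      exact hab (Fin.ext (hprim.pow_inj a.isLt b.isLt h3))
  -- Fourier inversion
  have hfour : ∀ (R : Fin k → ℂ) (m₀ : Fin k) (μ : ℂ),
      (∀ i : Fin k, ∑ j' : Fin k, R j' * (starRingEnd ℂ) (ζ ^ ((i : ℕ) * (j' : ℕ))) =
        μ * (starRingEnd ℂ) (ζ ^ ((i : ℕ) * (m₀ : ℕ)))) →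
      ∀ j₀ : Fin k, R j₀ = if j₀ = m₀ then μ else 0 := by
    intro R m₀ μ hE j₀
    have h1 : ∑ i : Fin k, ζ ^ ((i : ℕ) * (j₀ : ℕ)) *
        (∑ j' : Fin k, R j' * (starRingEnd ℂ) (ζ ^ ((i : ℕ) * (j' : ℕ)))) = (k : ℂ) * R j₀ := by
      calc ∑ i : Fin k, ζ ^ ((i : ℕ) * (j₀ : ℕ)) *
            (∑ j' : Fin k, R j' * (starRingEnd ℂ) (ζ ^ ((i : ℕ) * (j' : ℕ))))
          = ∑ i : Fin k, ∑ j' : Fin k,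
              R j' * (ζ ^ ((i : ℕ) * (j₀ : ℕ)) * (starRingEnd ℂ) (ζ ^ ((i : ℕ) * (j' : ℕ)))) := by
            refine Finset.sum_congr rfl fun i _ => ?_
            rw [Finset.mul_sum]
            exact Finset.sum_congr rfl fun j' _ => by ring
        _ = ∑ j' : Fin k, ∑ i : Fin k,
              R j' * (ζ ^ ((i : ℕ) * (j₀ : ℕ)) * (starRingEnd ℂ) (ζ ^ ((i : ℕ) * (j' : ℕ)))) :=
            Finset.sum_comm
        _ = ∑ j' : Fin k, R j' *
              ∑ i : Fin k, ζ ^ ((i : ℕ) * (j₀ : ℕ)) * (starRingEnd ℂ) (ζ ^ ((i : ℕ) * (j' : ℕ))) := by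
            refine Finset.sum_congr rfl fun j' _ => ?_
            rw [Finset.mul_sum]
        _ = ∑ j' : Fin k, R j' * (if j₀ = j' then (k : ℂ) else 0) := by
            refine Finset.sum_congr rfl fun j' _ => ?_
            rw [horth j₀ j']
        _ = (k : ℂ) * R j₀ := by
            simp only [mul_ite, mul_zero]
            rw [Finset.sum_ite_eq]
            simp [mul_comm]
    have h2 : ∑ i : Fin k, ζ ^ ((i : ℕ) * (j₀ : ℕ)) *
        (μ * (starRingEnd ℂ) (ζ ^ ((i : ℕ) * (m₀ : ℕ)))) =
          μ * (if j₀ = m₀ then (k : ℂ) else 0) := by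
      rw [← horth j₀ m₀, Finset.mul_sum]
      exact Finset.sum_congr rfl fun i _ => by ring
    rw [Finset.sum_congr rfl (fun i _ => by rw [hE i]), h2] at h1
    refine mul_left_cancel₀ hk0 ?_
    rw [← h1]
    split_ifs <;> ring
  -- H* H = c • 1
  have hHad' : H.conjTranspose * H = ((k * n + k : ℕ) : ℂ) • 1 := by
    set c : ℂ := ((k * n + k : ℕ) : ℂ) with hc
    have hc0 : c ≠ 0 := by
      rw [hc]
      exact Nat.cast_ne_zero.mpr (by omega)
    have h1 : H * (c⁻¹ • H.conjTranspose) = 1 := by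
      rw [Matrix.mul_smul, hHad, smul_smul, inv_mul_cancel₀ hc0, one_smul]
    have h2 : (c⁻¹ • H.conjTranspose) * H = 1 := mul_eq_one_comm.mp h1
    calc H.conjTranspose * H = (c • (c⁻¹ • H.conjTranspose)) * H := by
          rw [smul_smul, mul_inv_cancel₀ hc0, one_smul]
      _ = c • ((c⁻¹ • H.conjTranspose) * H) := by rw [Matrix.smul_mul]
      _ = c • 1 := by rw [h2]
  intro m j
  -- row sums
  have hrow : ∀ t : Fin n, ∀ j₀ : Fin k,
      (∑ u : Fin n, H (Sum.inr (m, t)) (Sum.inr (j₀, u))) =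
        if j₀ = m then -(starRingEnd ℂ) (lam m) else 0 := by
    intro t
    set R : Fin k → ℂ := fun j' => ∑ u : Fin n, H (Sum.inr (m, t)) (Sum.inr (j', u)) with hR
    have hE : ∀ i : Fin k, ∑ j' : Fin k, R j' * (starRingEnd ℂ) (ζ ^ ((i : ℕ) * (j' : ℕ))) =
        (-(starRingEnd ℂ) (lam m)) * (starRingEnd ℂ) (ζ ^ ((i : ℕ) * (m : ℕ))) := by
      intro i
      have h0 : (H * H.conjTranspose) (Sum.inr (m, t)) (Sum.inl i) = 0 := by
        rw [hHad]
        simp [Matrix.one_apply]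
      rw [Matrix.mul_apply, Fintype.sum_sum_type] at h0
      have hkey : ∑ c : Fin k, s (c - i) * ζ ^ ((c : ℕ) * (m : ℕ)) =
          ζ ^ ((i : ℕ) * (m : ℕ)) * lam m := by
        rw [hlam, Finset.mul_sum]
        refine (Fintype.sum_equiv (Equiv.addRight i)
          (fun l => ζ ^ ((i : ℕ) * (m : ℕ)) * (s l * ζ ^ ((l : ℕ) * (m : ℕ))))
          (fun c => s (c - i) * ζ ^ ((c : ℕ) * (m : ℕ))) ?_).symm
        intro l
        show ζ ^ ((i : ℕ) * (m : ℕ)) * (s l * ζ ^ ((l : ℕ) * (m : ℕ))) =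
          s ((l + i) - i) * ζ ^ (((l + i : Fin k) : ℕ) * (m : ℕ))
        rw [add_sub_cancel_right, hadd l i (m : ℕ)]
        ring
      have hA : ∑ c : Fin k, H (Sum.inr (m, t)) (Sum.inl c) *
          H.conjTranspose (Sum.inl c) (Sum.inl i) =
            (starRingEnd ℂ) (ζ ^ ((i : ℕ) * (m : ℕ)) * lam m) := by
        have hterm : ∀ c : Fin k, H (Sum.inr (m, t)) (Sum.inl c) *
            H.conjTranspose (Sum.inl c) (Sum.inl i) =
              (starRingEnd ℂ) (s (c - i) * ζ ^ ((c : ℕ) * (m : ℕ))) := by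
          intro c
          simp only [Matrix.conjTranspose_apply, hBL c m t, hTL, hS, map_mul,
            starRingEnd_apply]
          ring
        rw [Finset.sum_congr rfl fun c _ => hterm c, ← map_sum, hkey]
      have hB : ∑ p : Fin k × Fin n, H (Sum.inr (m, t)) (Sum.inr p) *
          H.conjTranspose (Sum.inr p) (Sum.inl i) =
            ∑ j' : Fin k, R j' * (starRingEnd ℂ) (ζ ^ ((i : ℕ) * (j' : ℕ))) := by
        rw [Fintype.sum_prod_type]
        refine Finset.sum_congr rfl fun j' _ => ?_
        have hterm : ∀ u : Fin n, H (Sum.inr (m, t)) (Sum.inr (j', u)) *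
            H.conjTranspose (Sum.inr (j', u)) (Sum.inl i) =
              H (Sum.inr (m, t)) (Sum.inr (j', u)) *
                (starRingEnd ℂ) (ζ ^ ((i : ℕ) * (j' : ℕ))) := by
          intro u
          rw [Matrix.conjTranspose_apply, hTR i j' u, starRingEnd_apply]
        rw [Finset.sum_congr rfl fun u _ => hterm u, ← Finset.sum_mul]
      rw [hA, hB] at h0
      have := eq_neg_of_add_eq_zero_right h0
      rw [this, map_mul]
      ring
    exact hfour R m (-(starRingEnd ℂ) (lam m)) hE
  -- column sums
  have hcol : ∀ u : Fin n, ∀ m₀ : Fin k,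
      (∑ t : Fin n, H (Sum.inr (m₀, t)) (Sum.inr (j, u))) =
        if m₀ = j then -(starRingEnd ℂ) (lam j) else 0 := by
    intro u
    set C : Fin k → ℂ := fun m' => ∑ t : Fin n, H (Sum.inr (m', t)) (Sum.inr (j, u)) with hC
    have hE0 : ∀ i : Fin k, ∑ m' : Fin k, ζ ^ ((i : ℕ) * (m' : ℕ)) * C m' =
        -(ζ ^ ((i : ℕ) * (j : ℕ)) * (starRingEnd ℂ) (lam j)) := by
      intro i
      have h0 : (H.conjTranspose * H) (Sum.inl i) (Sum.inr (j, u)) = 0 := by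
        rw [hHad']
        simp [Matrix.one_apply]
      rw [Matrix.mul_apply, Fintype.sum_sum_type] at h0
      have hkey : ∑ c : Fin k, (starRingEnd ℂ) (s (i - c)) * ζ ^ ((c : ℕ) * (j : ℕ)) =
          ζ ^ ((i : ℕ) * (j : ℕ)) * (starRingEnd ℂ) (lam j) := by
        have step : ∀ l : Fin k,
            ζ ^ ((i : ℕ) * (j : ℕ)) *
              ((starRingEnd ℂ) (s l) * (starRingEnd ℂ) (ζ ^ ((l : ℕ) * (j : ℕ)))) =
            (starRingEnd ℂ) (s (i - (i - l))) * ζ ^ (((i - l : Fin k) : ℕ) * (j : ℕ)) := by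
          intro l
          rw [sub_sub_cancel, hsub i l (j : ℕ)]
          ring
        calc ∑ c : Fin k, (starRingEnd ℂ) (s (i - c)) * ζ ^ ((c : ℕ) * (j : ℕ))
            = ∑ l : Fin k, ζ ^ ((i : ℕ) * (j : ℕ)) *
                ((starRingEnd ℂ) (s l) * (starRingEnd ℂ) (ζ ^ ((l : ℕ) * (j : ℕ)))) := by
              refine (Fintype.sum_equiv (Equiv.subLeft i)
                (fun l => ζ ^ ((i : ℕ) * (j : ℕ)) *
                  ((starRingEnd ℂ) (s l) * (starRingEnd ℂ) (ζ ^ ((l : ℕ) * (j : ℕ)))))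
                (fun c => (starRingEnd ℂ) (s (i - c)) * ζ ^ ((c : ℕ) * (j : ℕ))) ?_).symm
              intro l
              exact step l
          _ = ζ ^ ((i : ℕ) * (j : ℕ)) * (starRingEnd ℂ) (lam j) := by
              rw [← Finset.mul_sum, hlam, map_sum]
              congr 1
              exact Finset.sum_congr rfl fun l _ => by rw [map_mul]
      have hA : ∑ c : Fin k, H.conjTranspose (Sum.inl i) (Sum.inl c) *
          H (Sum.inl c) (Sum.inr (j, u)) =
            ζ ^ ((i : ℕ) * (j : ℕ)) * (starRingEnd ℂ) (lam j) := by
        rw [← hkey]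
        refine Finset.sum_congr rfl fun c _ => ?_
        rw [Matrix.conjTranspose_apply, hTL, hS, hTR c j u, starRingEnd_apply]
      have hB : ∑ p : Fin k × Fin n, H.conjTranspose (Sum.inl i) (Sum.inr p) *
          H (Sum.inr p) (Sum.inr (j, u)) =
            ∑ m' : Fin k, ζ ^ ((i : ℕ) * (m' : ℕ)) * C m' := by
        rw [Fintype.sum_prod_type]
        refine Finset.sum_congr rfl fun m' _ => ?_
        have hterm : ∀ t : Fin n, H.conjTranspose (Sum.inl i) (Sum.inr (m', t)) *
            H (Sum.inr (m', t)) (Sum.inr (j, u)) =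
              ζ ^ ((i : ℕ) * (m' : ℕ)) * H (Sum.inr (m', t)) (Sum.inr (j, u)) := by
          intro t
          rw [Matrix.conjTranspose_apply, hBL i m' t, ← starRingEnd_apply,
            Complex.conj_conj]
        rw [Finset.sum_congr rfl fun t _ => hterm t, ← Finset.mul_sum]
      rw [hA, hB] at h0
      exact eq_neg_of_add_eq_zero_right h0
    have hE : ∀ i : Fin k, ∑ m' : Fin k,
        ((starRingEnd ℂ) (C m')) * (starRingEnd ℂ) (ζ ^ ((i : ℕ) * (m' : ℕ))) =
          (-(lam j)) * (starRingEnd ℂ) (ζ ^ ((i : ℕ) * (j : ℕ))) := by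
      intro i
      have h := congrArg (starRingEnd ℂ) (hE0 i)
      rw [map_sum, map_neg, map_mul, Complex.conj_conj] at h
      calc ∑ m' : Fin k,
            ((starRingEnd ℂ) (C m')) * (starRingEnd ℂ) (ζ ^ ((i : ℕ) * (m' : ℕ)))
          = ∑ m' : Fin k, (starRingEnd ℂ) (ζ ^ ((i : ℕ) * (m' : ℕ)) * C m') := by
            refine Finset.sum_congr rfl fun m' _ => ?_
            rw [map_mul]; ring
        _ = -((starRingEnd ℂ) (ζ ^ ((i : ℕ) * (j : ℕ))) * lam j) := h
        _ = (-(lam j)) * (starRingEnd ℂ) (ζ ^ ((i : ℕ) * (j : ℕ))) := by ring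
    have hCval := hfour (fun m' => (starRingEnd ℂ) (C m')) j (-(lam j)) hE
    intro m₀
    have h1 := hCval m₀
    have h2 := congrArg (starRingEnd ℂ) h1
    rw [Complex.conj_conj] at h2
    calc (∑ t : Fin n, H (Sum.inr (m₀, t)) (Sum.inr (j, u))) = C m₀ := rfl
      _ = (starRingEnd ℂ) (if m₀ = j then -(lam j) else 0) := by
          rw [h2]
      _ = if m₀ = j then -(starRingEnd ℂ) (lam j) else 0 := by
          split_ifs <;> simp
  -- assemble
  refine ⟨fun hne => ⟨fun t => ?_, fun u => ?_⟩, fun heq => ⟨fun t => ?_, fun u => ?_⟩⟩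
  · rw [hrow t j, if_neg hne]
  · rw [hcol u m, if_neg (Ne.symm hne)]
  · rw [hrow t j, if_pos heq]
  · subst heq
    rw [hcol u j, if_pos rfl]
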